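/- If α is a Puiseux series of index n (the smallest natural number n with α ∈ ℂ[[x^{1/n}]]) and ε₁, ε₂ are distinct n-th roots of unity, then ε₁ * α ≠ ε₂ * α. -/

import Mathlib

/-!
STATEMENT 2. Puiseux series modelled as coefficient functions `ℚ → ℂ`.
The index of `α` is the smallest `n ∈ ℕ₊` with `α ∈ ℂ[[x^{1/n}]]`.
For an `n`-th root of unity `ε`, `ε * α` multiplies the coefficient of
`x^{i/n}` by `ε^i`.  Distinct `n`-th roots of unity give distinct series.
-/

abbrev PSer : Type := ℚ → ℂ

/-- Support of `φ` is contained in `(1/m)·ℕ`, i.e. `φ ∈ ℂ[[x^{1/m}]]`. -/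
def hasDen (m : ℕ) (φ : PSer) : Prop := ∀ q : ℚ, φ q ≠ 0 → ∃ i : ℕ, q = (i : ℚ) / m

/-- `n` is the index of `φ`: the smallest positive `m` with `φ ∈ ℂ[[x^{1/m}]]`. -/
def hasIndex (n : ℕ) (φ : PSer) : Prop :=
  0 < n ∧ hasDen n φ ∧ ∀ m : ℕ, 0 < m → m < n → ¬ hasDen m φ

/-- The star operation: `ε * (Σ aᵢ x^{i/n}) = Σ aᵢ ε^i x^{i/n}`. -/
noncomputable def star (n : ℕ) (ε : ℂ) (φ : PSer) : PSer :=
  fun q => ε ^ (q * n).num.toNat * φ q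

theorem stmt2 (n : ℕ) (α : PSer) (hα : hasIndex n α)
    (ε₁ ε₂ : ℂ) (h₁ : ε₁ ^ n = 1) (h₂ : ε₂ ^ n = 1) (hne : ε₁ ≠ ε₂) :
    star n ε₁ α ≠ star n ε₂ α := by
  obtain ⟨hn, hden, hmin⟩ := hα
  intro heq
  have hε₂ : ε₂ ≠ 0 := by
    intro h
    rw [h, zero_pow hn.ne'] at h₂
    exact one_ne_zero h₂.symm
  set ζ := ε₁ * ε₂⁻¹ with hζ
  have hζn : ζ ^ n = 1 := by
    rw [hζ, mul_pow, inv_pow, h₁, h₂, inv_one, one_mul]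
  have hζ1 : ζ ≠ 1 := by
    intro h
    apply hne
    field_simp [hζ] at h
    rw [hζ, mul_inv_eq_one₀ hε₂] at h
    exact h
  have hfin : IsOfFinOrder ζ := isOfFinOrder_iff_pow_eq_one.mpr ⟨n, hn, hζn⟩
  set r := orderOf ζ with hr
  have hr0 : 0 < r := hfin.orderOf_pos
  have hr1 : r ≠ 1 := by
    intro h
    exact hζ1 (orderOf_eq_one_iff.mp h)
  have hrdvd : r ∣ n := orderOf_dvd_of_pow_eq_one hζn
  -- key: for every i in the support, r ∣ i
  have key : ∀ i : ℕ, α ((i : ℚ) / n) ≠ 0 → r ∣ i := by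
    intro i hi
    have hq := congrFun heq ((i : ℚ) / n)
    have hqn : ((i : ℚ) / n * n) = (i : ℚ) := by
      field_simp
    simp only [_root_.star] at hq
    have hnum : ((i : ℚ)).num.toNat = i := by
      simp [Rat.num_natCast]
    rw [hqn, hnum] at hq
    have hpow : ε₁ ^ i = ε₂ ^ i := mul_right_cancel₀ hi hq
    have : ζ ^ i = 1 := by
      rw [hζ, mul_pow, inv_pow, hpow, mul_inv_cancel₀ (pow_ne_zero _ hε₂)]
    exact orderOf_dvd_of_pow_eq_one this
  -- now α has denominator n / r < n, contradiction
  have hm0 : 0 < n / r := Nat.div_pos (Nat.le_of_dvd hn hrdvd) hr0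
  have hmlt : n / r < n := Nat.div_lt_self hn (by omega)
  apply hmin (n / r) hm0 hmlt
  intro q hq
  obtain ⟨i, hi⟩ := hden q hq
  rw [hi] at hq
  obtain ⟨j, hj⟩ := key i hq
  refine ⟨j, ?_⟩
  obtain ⟨m, hm⟩ := hrdvd
  have hmr : n / r = m := by rw [hm, Nat.mul_div_cancel_left _ hr0]
  rw [hi, hj, hmr, hm]
  have hrQ : (r : ℚ) ≠ 0 := by positivity
  have hmQ : (m : ℚ) ≠ 0 := by
    have : 0 < m := by omega
    positivity
  push_cast
  field_simp
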